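/- arXiv:1812.07643 — 3 statements merged into one kernel-verified Lean document; each statement's English description precedes it below -/
import Mathlib

section
/- On the special linear group SL(n,ℝ) with the left-invariant form ⟨U,V⟩_A = Tr((A⁻¹U)ᵀ I_{p,q} A⁻¹V), the semi-normal space at A equals {λ A I_{p,q} : λ ∈ ℝ}, and the induced semi-Riemannian structure on SL(n,ℝ) is non-degenerate if and only if p ≠ q. Equivalently, at the identity: the set of X ∈ ℝ^{n×n} with Tr(Xᵀ I_{p,q} V) = 0 for all traceless V equals {λ I_{p,q}}, and λI_{p,q} is traceless iff p = q. -/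
open Matrix

/-- at the identity of `SL(n,ℝ)` with the form
`⟨U,V⟩ = Tr(Uᵀ I_{p,q} V)`, the semi-normal space — the set of `X` with
`Tr(Xᵀ I_{p,q} V) = 0` for all traceless `V` — equals `{λ I_{p,q} : λ ∈ ℝ}`, and
a nonzero multiple `λ I_{p,q}` is traceless (i.e. lies in the tangent space, so the
structure is degenerate) iff `p = q`. -/
theorem stmt_15 (p q : ℕ) :
    let J : Matrix (Fin p ⊕ Fin q) (Fin p ⊕ Fin q) ℝ := Matrix.fromBlocks (-1) 0 0 1
    ({X : Matrix (Fin p ⊕ Fin q) (Fin p ⊕ Fin q) ℝ |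
        ∀ V : Matrix (Fin p ⊕ Fin q) (Fin p ⊕ Fin q) ℝ,
          V.trace = 0 → (Xᵀ * J * V).trace = 0}
      = {X | ∃ c : ℝ, X = c • J}) ∧
    (∀ c : ℝ, c ≠ 0 → ((c • J).trace = 0 ↔ p = q)) := by
  intro J
  have hJT : Jᵀ = J := by
    simp [J, Matrix.fromBlocks_transpose]
  have hJJ : J * J = 1 := by
    simp [J, Matrix.fromBlocks_multiply, ← Matrix.fromBlocks_one]
  have htr : J.trace = -(p : ℝ) + q := by
    simp [J, Matrix.trace, Matrix.diag, Fintype.sum_sum_type, Matrix.fromBlocks,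
      Matrix.one_apply]
  have htrace_mul : ∀ (M : Matrix (Fin p ⊕ Fin q) (Fin p ⊕ Fin q) ℝ) i j,
      (M * Matrix.single i j 1).trace = M j i := by
    intro M i j
    simp [Matrix.trace, Matrix.diag, Matrix.mul_apply, Matrix.single, ite_and,
      Finset.sum_ite_eq]
  constructor
  · ext X
    simp only [Set.mem_setOf_eq]
    constructor
    · intro h
      by_cases hne : Nonempty (Fin p ⊕ Fin q)
      · obtain ⟨i₀⟩ := hne
        set M := Xᵀ * J with hM
        have hoff : ∀ i j, i ≠ j → M j i = 0 := by
          intro i j hij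
          have h1 := h (Matrix.single i j 1)
            (Matrix.trace_single_eq_of_ne _ _ _ hij)
          rwa [htrace_mul] at h1
        have hdiag : ∀ i, M i i = M i₀ i₀ := by
          intro i
          by_cases hii : i = i₀
          · rw [hii]
          · have htr0 : (Matrix.single i i (1:ℝ) - Matrix.single i₀ i₀ 1).trace = 0 := by
              rw [Matrix.trace_sub, Matrix.trace_single_eq_same,
                Matrix.trace_single_eq_same, sub_self]
            have h1 := h _ htr0
            rw [Matrix.mul_sub, Matrix.trace_sub, htrace_mul, htrace_mul] at h1
            linarith
        have hMs : M = (M i₀ i₀) • (1 : Matrix (Fin p ⊕ Fin q) (Fin p ⊕ Fin q) ℝ) := by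
          ext i j
          by_cases hij : i = j
          · subst hij
            simp [Matrix.one_apply, hdiag i]
          · simp [Matrix.one_apply, hij, hoff j i (Ne.symm hij)]
        refine ⟨M i₀ i₀, ?_⟩
        have hXT : Xᵀ = (M i₀ i₀) • J := by
          calc Xᵀ = Xᵀ * (J * J) := by rw [hJJ, Matrix.mul_one]
            _ = M * J := by rw [← Matrix.mul_assoc, hM]
            _ = (M i₀ i₀) • J := by conv_lhs => rw [hMs, Matrix.smul_mul, Matrix.one_mul]
        calc X = Xᵀᵀ := (Matrix.transpose_transpose X).symm
          _ = ((M i₀ i₀) • J)ᵀ := by rw [hXT]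
          _ = (M i₀ i₀) • J := by rw [Matrix.transpose_smul, hJT]
      · exact ⟨0, by ext i j; exact (hne ⟨i⟩).elim⟩
    · rintro ⟨c, rfl⟩ V hV
      rw [Matrix.transpose_smul, hJT, Matrix.smul_mul, Matrix.smul_mul, hJJ,
        Matrix.one_mul, Matrix.trace_smul, hV, smul_zero]
  · intro c hc
    rw [Matrix.trace_smul, htr, smul_eq_mul]
    constructor
    · intro h
      have h2 := (mul_eq_zero.mp h).resolve_left hc
      have : (p : ℝ) = q := by linarith
      exact_mod_cast this
    · intro h
      subst h
      simp
end

section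
/- Let Δ be an n×n skew-symmetric matrix in block form [[Δ₁, −Δ₂ᵀ],[Δ₂, Δ₃]] with Δ₁ ∈ ℝ^{p×p}, Δ₃ ∈ ℝ^{q×q} skew-symmetric, Δ₂ ∈ ℝ^{q×p}, n = p+q, and suppose Δ₂Δ₁ + Δ₃Δ₂ = 0. Then the skew-symmetric part of I_{p,q}(Δ² ) vanishes, i.e., I_{p,q}Δ² is a symmetric matrix. -/
open Matrix

/-- for a skew-symmetric `Δ = [[Δ₁, -Δ₂ᵀ],[Δ₂, Δ₃]]` (with `Δ₁`, `Δ₃`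
skew-symmetric) satisfying `Δ₂Δ₁ + Δ₃Δ₂ = 0`, the matrix `I_{p,q}Δ²` is symmetric,
i.e. its skew-symmetric part vanishes. -/
theorem stmt_16 (p q : ℕ)
    (Δ₁ : Matrix (Fin p) (Fin p) ℝ) (Δ₃ : Matrix (Fin q) (Fin q) ℝ)
    (Δ₂ : Matrix (Fin q) (Fin p) ℝ)
    (h1 : Δ₁ᵀ = -Δ₁) (h3 : Δ₃ᵀ = -Δ₃)
    (hcomm : Δ₂ * Δ₁ + Δ₃ * Δ₂ = 0) :
    let J : Matrix (Fin p ⊕ Fin q) (Fin p ⊕ Fin q) ℝ := Matrix.fromBlocks (-1) 0 0 1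
    let Δ : Matrix (Fin p ⊕ Fin q) (Fin p ⊕ Fin q) ℝ :=
      Matrix.fromBlocks Δ₁ (-Δ₂ᵀ) Δ₂ Δ₃
    (J * (Δ * Δ))ᵀ = J * (Δ * Δ) := by
  intro J Δ
  have hΔΔ : Δ * Δ = Matrix.fromBlocks (Δ₁ * Δ₁ - Δ₂ᵀ * Δ₂) 0 0 (Δ₃ * Δ₃ - Δ₂ * Δ₂ᵀ) := by
    have hcomm' : -(Δ₁ * Δ₂ᵀ) + -(Δ₂ᵀ * Δ₃) = 0 := by
      have := congrArg Matrix.transpose hcomm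
      simpa [Matrix.transpose_add, Matrix.transpose_mul, h1, h3, Matrix.mul_neg,
        Matrix.neg_mul, neg_add, add_comm] using this
    simp only [Δ, Matrix.fromBlocks_multiply]
    congr 1 <;>
      simp [Matrix.mul_neg, Matrix.neg_mul, sub_eq_add_neg, hcomm, hcomm', add_comm]
  rw [hΔΔ]
  simp only [J, Matrix.fromBlocks_multiply, Matrix.fromBlocks_transpose,
    Matrix.mul_zero, Matrix.zero_mul, Matrix.neg_mul, Matrix.one_mul,
    Matrix.transpose_neg, Matrix.transpose_zero, Matrix.transpose_sub, Matrix.transpose_mul,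
    h1, h3, Matrix.transpose_transpose, add_zero, zero_add, neg_neg,
    Matrix.mul_neg]
end

section
/- Let x ∈ S^{p,q}, X ∈ T_xS^{p,q} with ⟨X,X⟩ = 0 (null), and Δ ∈ T_xS^{p,q}. Then the vector field Δ(t) = −⟨Δ,X⟩(t x + (t²/2)X) + Δ along the geodesic γ(t) = x + tX satisfies: Δ(0) = Δ, Δ(t) ∈ T_{γ(t)}S^{p,q} for all t (i.e., ⟨Δ(t), γ(t)⟩ = 0), and Δ'(t) = −⟨Δ,X⟩γ(t) lies in the semi-normal space span(γ(t)); moreover ⟨Δ(t),Δ(t)⟩ = ⟨Δ,Δ⟩ for all t. -/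
open Matrix

/-- The matrix `I_{p,q} = diag(-1,…,-1,1,…,1)` with `p` minus-ones and `q` ones. -/
def Ipq (p q : ℕ) : Matrix (Fin (p + q)) (Fin (p + q)) ℝ :=
  Matrix.diagonal fun i => if (i : ℕ) < p then (-1 : ℝ) else 1

/-- parallel transport along a null geodesic `γ(t) = x + tX` on `S^{p,q}`:
`Δ(t) = -⟨Δ,X⟩(t x + (t²/2)X) + Δ` satisfies `Δ(0) = Δ`, is tangent along `γ`,
`Δ'(t) = -⟨Δ,X⟩γ(t) ∈ span(γ(t))`, and preserves the scalar square `⟨Δ(t),Δ(t)⟩`. -/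
theorem stmt_17 (p q : ℕ) (x X Δ : Fin (p + q) → ℝ)
    (hx : x ⬝ᵥ (Ipq p q *ᵥ x) = 1) (hXt : x ⬝ᵥ (Ipq p q *ᵥ X) = 0)
    (hXnull : X ⬝ᵥ (Ipq p q *ᵥ X) = 0) (hΔt : x ⬝ᵥ (Ipq p q *ᵥ Δ) = 0) :
    let γ : ℝ → (Fin (p + q) → ℝ) := fun t => x + t • X
    let c : ℝ := Δ ⬝ᵥ (Ipq p q *ᵥ X)
    let D : ℝ → (Fin (p + q) → ℝ) := fun t => (-c) • (t • x + (t ^ 2 / 2) • X) + Δ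
    D 0 = Δ ∧
      (∀ t : ℝ, D t ⬝ᵥ (Ipq p q *ᵥ γ t) = 0) ∧
      (∀ t : ℝ, deriv D t = (-c) • γ t) ∧
      (∀ t : ℝ, D t ⬝ᵥ (Ipq p q *ᵥ D t) = Δ ⬝ᵥ (Ipq p q *ᵥ Δ)) := by
  have hsym : ∀ u v : Fin (p + q) → ℝ,
      u ⬝ᵥ (Ipq p q *ᵥ v) = v ⬝ᵥ (Ipq p q *ᵥ u) := by
    intro u v
    simp only [Ipq, dotProduct, Matrix.mulVec_diagonal]
    exact Finset.sum_congr rfl fun i _ => by ring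
  intro γ c D
  have hXx : X ⬝ᵥ (Ipq p q *ᵥ x) = 0 := by rw [hsym]; exact hXt
  have hΔx : Δ ⬝ᵥ (Ipq p q *ᵥ x) = 0 := by rw [hsym]; exact hΔt
  have hXΔ : X ⬝ᵥ (Ipq p q *ᵥ Δ) = c := hsym X Δ
  have hxΔ : x ⬝ᵥ (Ipq p q *ᵥ Δ) = 0 := hΔt
  refine ⟨?_, ?_, ?_, ?_⟩
  · simp [D]
  · intro t
    simp only [D, γ, Matrix.mulVec_add, Matrix.mulVec_smul, dotProduct_add,
      add_dotProduct, smul_dotProduct, dotProduct_smul, smul_eq_mul,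
      hx, hXt, hXnull, hΔt, hXx, hΔx, hXΔ]
    ring
  · intro t
    have h1 : HasDerivAt (fun t : ℝ => t • x) ((1 : ℝ) • x) t :=
      (hasDerivAt_id t).smul_const x
    have h2 : HasDerivAt (fun t : ℝ => (t ^ 2 / 2) • X) (t • X) t := by
      have : HasDerivAt (fun t : ℝ => t ^ 2 / 2) t t := by
        simpa using ((hasDerivAt_pow 2 t).div_const 2)
      simpa using this.smul_const X
    have hD : HasDerivAt D ((-c) • ((1 : ℝ) • x + t • X)) t :=
      (((h1.add h2).const_smul (-c)).add_const Δ)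
    rw [hD.deriv]
    simp [γ]
  · intro t
    simp only [D, Matrix.mulVec_add, Matrix.mulVec_smul, dotProduct_add,
      add_dotProduct, smul_dotProduct, dotProduct_smul, smul_eq_mul,
      hx, hXt, hXnull, hΔt, hXx, hΔx, hXΔ]
    ring
end
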